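/- The set of X ∈ ℚ for which there exist p, q ∈ ℚ with (p² + q² + 1)² = 9 + 24X + 288X² + 16X³ + 4X⁴ is infinite; that is, the curve Y² = 9 + 24X + 288X² + 16X³ + 4X⁴ has infinitely many rational points with Y-coordinate represented by the inhomogeneous quadratic form p² + q² + 1. -/

import Mathlib

/- We prove infinitude via an explicit sequence of rational points on the elliptic
curve `Y² = X³ + 307152·X + 3921063552` (obtained from the quartic
`v² = -2u⁴+63u²+195`, itself a fibration of the surface), doubling at each step.
The 2-adic valuation of `X` drops by 2 at each doubling, and the induced surface
points `s` satisfy `v₂(s + 2/9) = k + 2`, strictly increasing, hence all distinct. -/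

private lemma v2c {a : ℚ} (j : ℕ) (m : ℤ) (h : a = ((2 ^ j * m : ℤ) : ℚ))
    (hm : ¬ (2:ℤ) ∣ m) : padicValRat 2 a = j := by
  have hm0 : m ≠ 0 := by rintro rfl; exact hm (dvd_zero 2)
  have h2 : a = ((2:ℚ)) ^ j * ((m : ℤ) : ℚ) := by rw [h]; push_cast; ring
  rw [h2, padicValRat.mul (by positivity) (by exact_mod_cast hm0),
      padicValRat.pow (2:ℚ)]
  have hs : padicValRat 2 (2:ℚ) = 1 := by
    have := padicValRat.self (p := 2) (by norm_num)
    simpa using this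
  rw [hs, padicValRat.of_int, padicValInt.eq_zero_of_not_dvd hm]
  ring

private lemma vadd {a b : ℚ} (ha : a ≠ 0) (hv : padicValRat 2 a < padicValRat 2 b) :
    a + b ≠ 0 ∧ padicValRat 2 (a + b) = padicValRat 2 a := by
  have hab : a + b ≠ 0 := by
    intro h0
    have hb : b = -a := by linarith
    rw [hb, padicValRat.neg] at hv
    exact lt_irrefl _ hv
  refine ⟨hab, ?_⟩
  have h1 := padicValRat.min_le_padicValRat_add (p := 2) hab
  rw [min_eq_left hv.le] at h1
  rcases h1.lt_or_eq with h2 | h2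
  · exfalso
    have hne : a + b + -b ≠ 0 := by
      intro h; apply ha; linarith
    have h3 := padicValRat.min_le_padicValRat_add (p := 2) (q := a + b) (r := -b) hne
    rw [padicValRat.neg, show a + b + -b = a by ring] at h3
    rcases min_le_iff.mp h3 with h5 | h5 <;> linarith
  · exact h2.symm

/-- Doubling preserves the Weierstrass equation. -/
private lemma dblE (X Y l : ℚ) (hE : Y ^ 2 = X ^ 3 + 307152 * X + 3921063552)
    (hl : l * (2 * Y) = 3 * X ^ 2 + 307152) (hY0 : Y ≠ 0) :
    (l * (X - (l ^ 2 - 2 * X)) - Y) ^ 2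
      = (l ^ 2 - 2 * X) ^ 3 + 307152 * (l ^ 2 - 2 * X) + 3921063552 := by
  have key : (2 * Y) ^ 6 * ((l * (X - (l ^ 2 - 2 * X)) - Y) ^ 2
      - ((l ^ 2 - 2 * X) ^ 3 + 307152 * (l ^ 2 - 2 * X) + 3921063552)) = 0 := by
    linear_combination (64*Y^6*l^2 - 192*X*Y^6) * hl + (64*Y^6) * hE
  have h6 : (2 * Y) ^ 6 ≠ 0 := pow_ne_zero _ (by simpa using hY0)
  have := (mul_eq_zero.mp key).resolve_left h6
  linarith [this]

/-- The induced quartic relation. -/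
private lemma quarticId (X Y t : ℚ) (hE : Y ^ 2 = X ^ 3 + 307152 * X + 3921063552)
    (htD : t * (8 * Y - 177 * X + 329508) = 1536 * X + 1128168)
    (hD0 : 8 * Y - 177 * X + 329508 ≠ 0) :
    (((X - 612) * t ^ 2 - 4248 * t) / 1152 - 16) ^ 2
      = -2 * (1 + t) ^ 4 + 63 * (1 + t) ^ 2 + 195 := by
  have key : (8 * Y - 177 * X + 329508) ^ 4 *
      ((((X - 612) * t ^ 2 - 4248 * t) / 1152 - 16) ^ 2
        - (-2 * (1 + t) ^ 4 + 63 * (1 + t) ^ 2 + 195)) = 0 := by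
    linear_combination (5776139758878220032 + 1687057476961272192*t + (5647491523807808499/8)*t^2 + (1306401371896971321/16)*t^3 + 40959429864192*Y*t + 44630324657883*Y*t^2 + (47576436574419/8)*Y*t^3 - 1473105366*Y^2 - 430255071*Y^2*t + (1837559439/2)*Y^2*t^2 + (577545147/4)*Y^2*t^3 - 10446*Y^3*t + 6102*Y^3*t^2 + (2337/2)*Y^3*t^3 + 16180888327227360*X + 1522853980075728*X*t + (-7590778679695275/8)*X*t^2 + (-10532836749757221/64)*X*t^3 + 58974746976*X*Y*t + (-177369946425/4)*X*Y*t^2 + (-70339660875/8)*X*Y*t^3 - 4011264*X*Y^2 + (-1418697/4)*X*Y^2*t + (-2609127/4)*X*Y^2*t^2 + (-2174553/16)*X*Y^2*t^3 + (-128/9)*X*Y^3*t + (-59/18)*X*Y^3*t^2 + (-17/36)*X*Y^3*t^3 + 11939185299456*X^2 - 1124889092460*X^2*t + (30067517532393/64)*X^2*t^2 + (19303949805165/128)*X^2*t^3 + 4368384*X^2*Y*t + (270645921/16)*X^2*Y*t^2 + (400738185/64)*X^2*Y*t^3 + (-8192/3)*X^2*Y^2 + (944/3)*X^2*Y^2*t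 + (17405/96)*X^2*Y^2*t^2 + (5057/64)*X^2*Y^2*t^3 + (1/2592)*X^2*Y^3*t^3 + 2311835094*X^3 + 333604575*X^3*t + (592351461/128)*X^3*t^2 + (-43346978037/512)*X^3*t^3 + 10446*X^3*Y*t + (185149/64)*X^3*Y*t^2 + (-358779/128)*X^3*Y*t^3 + (2/27)*X^3*Y^2*t^2 + (-59/2304)*X^3*Y^2*t^3 + 4011264*X^4 + (1418697/4)*X^4*t + (-240141741/2048)*X^4*t^2 + (116533437/4096)*X^4*t^3 + (128/9)*X^4*Y*t + (-59/18)*X^4*Y*t^2 + (3481/6144)*X^4*Y*t^3 + (8192/3)*X^5 + (-944/3)*X^5*t + (3481/96)*X^5*t^2 + (-205379/49152)*X^5*t^3) * htD + (-1661910334549488 - 6788069526528*X - 9241952256*X^2 - 4194304*X^3) * hE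
  have h4 : (8 * Y - 177 * X + 329508) ^ 4 ≠ 0 := pow_ne_zero _ hD0
  have := (mul_eq_zero.mp key).resolve_left h4
  linarith [this]

/-- Reduction of `w` to the form `m₀ + m₁·Y`. -/
private lemma wred (X Y t : ℚ) (hE : Y ^ 2 = X ^ 3 + 307152 * X + 3921063552)
    (htD : t * (8 * Y - 177 * X + 329508) = 1536 * X + 1128168) :
    ((((X - 612) * t ^ 2 - 4248 * t) / 1152 - 16) - 16) * (1152 * (8 * Y - 177 * X + 329508) ^ 2)
      = (52199424 * X - 232691387904) * Y
        + (2021842944 * X ^ 2 + 1425353490432 * X - 15611561717465088) := by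
  linear_combination (-2090188800 - 201658896*t - 33984*Y - 4896*Y*t + 940032*X + 437832*X*t + 8*X*Y*t + 1536*X^2 - 177*X^2*t) * htD + (-2359296) * hE

/-- The surface identity. -/
private lemma surfId (u vc s : ℚ) (hq : vc ^ 2 = -2 * u ^ 4 + 63 * u ^ 2 + 195)
    (h65 : 2 * u ^ 2 - 65 ≠ 0) (hs : s * (2 * u ^ 2 - 65) = u * (vc - 2 * u)) :
    ((s + 1 + u) ^ 2 + (s + 1 - u) ^ 2 + 1) ^ 2
      = 9 + 24 * s + 288 * s ^ 2 + 16 * s ^ 3 + 4 * s ^ 4 := by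
  have key : (2 * u ^ 2 - 65) ^ 4 * (((s + 1 + u) ^ 2 + (s + 1 - u) ^ 2 + 1) ^ 2
      - (9 + 24 * s + 288 * s ^ 2 + 16 * s ^ 3 + 4 * s ^ 4)) = 0 := by
    linear_combination (71402500*s - 1098500*u*vc - 2197000*u^2 - 8788000*u^2*s + 101400*u^3*vc + 202800*u^4 + 405600*u^4*s - 3120*u^5*vc - 6240*u^6 - 8320*u^6*s + 32*u^7*vc + 64*u^8 + 64*u^8*s) * hs + (-1098500*u^2 + 101400*u^4 - 3120*u^6 + 32*u^8) * hq
  have h4 : (2 * u ^ 2 - 65) ^ 4 ≠ 0 := pow_ne_zero _ h65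
  have := (mul_eq_zero.mp key).resolve_left h4
  linarith [this]


/-- Main lemma: from a point on the curve with `v₂(X) = -2k`, `k ≥ 4`, produce a
surface point `s` with `v₂(s + 2/9) = k + 2`. -/
private lemma main (X Y : ℚ) (k : ℤ) (hk : 4 ≤ k)
    (hE : Y ^ 2 = X ^ 3 + 307152 * X + 3921063552)
    (hX : padicValRat 2 X = -2 * k) (hY : padicValRat 2 Y = -3 * k) :
    ∃ s p q : ℚ, ((p ^ 2 + q ^ 2 + 1) ^ 2
        = 9 + 24 * s + 288 * s ^ 2 + 16 * s ^ 3 + 4 * s ^ 4)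
      ∧ padicValRat 2 (s + 2/9) = k + 2 := by
  have hX0 : X ≠ 0 := by intro h; rw [h, padicValRat.zero] at hX; omega
  have hY0 : Y ≠ 0 := by intro h; rw [h, padicValRat.zero] at hY; omega
  -- constants
  have c1536 : padicValRat 2 (1536:ℚ) = 9 := v2c 9 3 (by norm_num) (by decide)
  have c1128168 : padicValRat 2 (1128168:ℚ) = 3 := v2c 3 141021 (by norm_num) (by decide)
  have c8 : padicValRat 2 (8:ℚ) = 3 := v2c 3 1 (by norm_num) (by decide)
  have c177 : padicValRat 2 (177:ℚ) = 0 := v2c 0 177 (by norm_num) (by decide)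
  have c329508 : padicValRat 2 (329508:ℚ) = 2 := v2c 2 82377 (by norm_num) (by decide)
  have c52 : padicValRat 2 (52199424:ℚ) = 15 := v2c 15 1593 (by norm_num) (by decide)
  have c232 : padicValRat 2 (-232691387904:ℚ) = 9 := v2c 9 (-454475367) (by norm_num) (by decide)
  have c2021 : padicValRat 2 (2021842944:ℚ) = 13 := v2c 13 246807 (by norm_num) (by decide)
  have c1425 : padicValRat 2 (1425353490432:ℚ) = 14 := v2c 14 86996673 (by norm_num) (by decide)
  have c15611 : padicValRat 2 (-15611561717465088:ℚ) = 16 :=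
    v2c 16 (-238213527183) (by norm_num) (by decide)
  have c1152 : padicValRat 2 (1152:ℚ) = 7 := v2c 7 9 (by norm_num) (by decide)
  have c9 : padicValRat 2 (9:ℚ) = 0 := v2c 0 9 (by norm_num) (by decide)
  have c116 : padicValRat 2 (116:ℚ) = 2 := v2c 2 29 (by norm_num) (by decide)
  have c14 : padicValRat 2 (14:ℚ) = 1 := v2c 1 7 (by norm_num) (by decide)
  have c63 : padicValRat 2 (-63:ℚ) = 0 := v2c 0 (-63) (by norm_num) (by decide)
  have c4 : padicValRat 2 (4:ℚ) = 2 := v2c 2 1 (by norm_num) (by decide)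
  have c2 : padicValRat 2 (2:ℚ) = 1 := v2c 1 1 (by norm_num) (by decide)
  -- numerator Nt = 1536 X + 1128168
  have h1 : (1536:ℚ) * X ≠ 0 := mul_ne_zero (by norm_num) hX0
  have h2 : padicValRat 2 ((1536:ℚ) * X) = 9 + -2*k := by
    rw [padicValRat.mul (by norm_num) hX0, c1536, hX]
  have hNt := vadd h1 (show padicValRat 2 ((1536:ℚ)*X) < padicValRat 2 (1128168:ℚ) by
    rw [h2, c1128168]; omega)
  have hNtV : padicValRat 2 (1536*X + 1128168 : ℚ) = 9 + -2*k := by rw [hNt.2, h2]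
  -- denominator Dt = 8Y - 177X + 329508
  have h3 : (8:ℚ) * Y ≠ 0 := mul_ne_zero (by norm_num) hY0
  have h4 : padicValRat 2 ((8:ℚ) * Y) = 3 + -3*k := by
    rw [padicValRat.mul (by norm_num) hY0, c8, hY]
  have h6 : padicValRat 2 (-((177:ℚ) * X)) = 0 + -2*k := by
    rw [padicValRat.neg, padicValRat.mul (by norm_num) hX0, c177, hX]
  have hD1 := vadd h3 (show padicValRat 2 ((8:ℚ)*Y) < padicValRat 2 (-((177:ℚ)*X)) by
    rw [h4, h6]; omega)
  have hD1V : padicValRat 2 (8*Y + -(177*X) : ℚ) = 3 + -3*k := by rw [hD1.2, h4]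
  have hD2 := vadd hD1.1 (show padicValRat 2 ((8*Y + -(177*X) : ℚ)) < padicValRat 2 (329508:ℚ) by
    rw [hD1V, c329508]; omega)
  have hDg : (8*Y - 177*X + 329508 : ℚ) = 8*Y + -(177*X) + 329508 := by ring
  have hD0 : (8*Y - 177*X + 329508 : ℚ) ≠ 0 := by rw [hDg]; exact hD2.1
  have hDV : padicValRat 2 (8*Y - 177*X + 329508 : ℚ) = 3 + -3*k := by
    rw [hDg, hD2.2, hD1V]
  -- t
  set t : ℚ := (1536*X + 1128168) / (8*Y - 177*X + 329508) with htdef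
  have ht0 : t ≠ 0 := div_ne_zero hNt.1 hD0
  have htD : t * (8*Y - 177*X + 329508) = 1536*X + 1128168 := by
    rw [htdef]; exact div_mul_cancel₀ _ hD0
  have htV : padicValRat 2 t = k + 6 := by
    rw [htdef, padicValRat.div hNt.1 hD0, hNtV, hDV]; omega
  -- the two curve-derived identities (before folding)
  have hwred := wred X Y t hE htD
  have hq0 := quarticId X Y t hE htD hD0
  -- fold names
  set vc : ℚ := ((X - 612) * t ^ 2 - 4248 * t) / 1152 - 16 with hvc
  set u : ℚ := 1 + t with hu
  set w : ℚ := vc - 16 with hwdef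
  -- valuation of M = m₁·Y + m₀
  have h7 : (52199424:ℚ) * X ≠ 0 := mul_ne_zero (by norm_num) hX0
  have h8 : padicValRat 2 ((52199424:ℚ) * X) = 15 + -2*k := by
    rw [padicValRat.mul (by norm_num) hX0, c52, hX]
  have hm1 := vadd h7 (show padicValRat 2 ((52199424:ℚ)*X) < padicValRat 2 (-232691387904:ℚ) by
    rw [h8, c232]; omega)
  have hm1V : padicValRat 2 (52199424*X + -232691387904 : ℚ) = 15 + -2*k := by rw [hm1.2, h8]
  have hA1 : (52199424*X + -232691387904 : ℚ) * Y ≠ 0 := mul_ne_zero hm1.1 hY0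
  have hA1V : padicValRat 2 ((52199424*X + -232691387904 : ℚ) * Y) = 15 + -2*k + -3*k := by
    rw [padicValRat.mul hm1.1 hY0, hm1V, hY]
  have h9a : (2021842944:ℚ) * X ^ 2 ≠ 0 := mul_ne_zero (by norm_num) (pow_ne_zero 2 hX0)
  have h9b : padicValRat 2 ((2021842944:ℚ) * X ^ 2) = 13 + 2*(-2*k) := by
    rw [padicValRat.mul (by norm_num) (pow_ne_zero 2 hX0), padicValRat.pow X, c2021, hX]
    push_cast; ring
  have h9c : padicValRat 2 ((1425353490432:ℚ) * X) = 14 + -2*k := by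
    rw [padicValRat.mul (by norm_num) hX0, c1425, hX]
  have hm0a := vadd h9a (show padicValRat 2 ((2021842944:ℚ)*X^2)
      < padicValRat 2 ((1425353490432:ℚ)*X) by rw [h9b, h9c]; omega)
  have hm0aV : padicValRat 2 (2021842944*X^2 + 1425353490432*X : ℚ) = 13 + 2*(-2*k) := by
    rw [hm0a.2, h9b]
  have hm0 := vadd hm0a.1 (show padicValRat 2 ((2021842944*X^2 + 1425353490432*X : ℚ))
      < padicValRat 2 (-15611561717465088:ℚ) by rw [hm0aV, c15611]; omega)
  have hm0V : padicValRat 2 (2021842944*X^2 + 1425353490432*X + -15611561717465088 : ℚ)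
      = 13 + 2*(-2*k) := by rw [hm0.2, hm0aV]
  have hM := vadd hA1 (show padicValRat 2 ((52199424*X + -232691387904 : ℚ) * Y)
      < padicValRat 2 ((2021842944*X^2 + 1425353490432*X + -15611561717465088 : ℚ)) by
    rw [hA1V, hm0V]; omega)
  have hMV : padicValRat 2 ((52199424*X + -232691387904 : ℚ) * Y
      + (2021842944*X^2 + 1425353490432*X + -15611561717465088)) = 15 + -2*k + -3*k := by
    rw [hM.2, hA1V]
  -- w = M / (1152 Dt²)
  have hwM : w * (1152 * (8*Y - 177*X + 329508)^2)
      = (52199424*X + -232691387904) * Y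
        + (2021842944*X^2 + 1425353490432*X + -15611561717465088) := by
    rw [hwdef, hvc]; linear_combination hwred
  have hDen2 : (1152:ℚ) * (8*Y - 177*X + 329508)^2 ≠ 0 :=
    mul_ne_zero (by norm_num) (pow_ne_zero 2 hD0)
  have hw0 : w ≠ 0 := by
    intro h
    rw [h, zero_mul] at hwM
    exact hM.1 hwM.symm
  have hDen2V : padicValRat 2 ((1152:ℚ) * (8*Y - 177*X + 329508)^2) = 7 + 2*(3 + -3*k) := by
    rw [padicValRat.mul (by norm_num) (pow_ne_zero 2 hD0), padicValRat.pow (8*Y - 177*X + 329508), c1152, hDV]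
    push_cast; ring
  have hwV : padicValRat 2 w = k + 2 := by
    have := padicValRat.mul (p := 2) hw0 hDen2
    rw [hwM, hMV, hDen2V] at this
    omega
  -- numerator of s + 2/9
  have hn1a : (9:ℚ) * w ≠ 0 := mul_ne_zero (by norm_num) hw0
  have hn1b : padicValRat 2 ((9:ℚ) * w) = 0 + (k+2) := by
    rw [padicValRat.mul (by norm_num) hw0, c9, hwV]
  have hn1c : padicValRat 2 ((116:ℚ) * t) = 2 + (k+6) := by
    rw [padicValRat.mul (by norm_num) ht0, c116, htV]
  have hn1 := vadd hn1a (show padicValRat 2 ((9:ℚ)*w) < padicValRat 2 ((116:ℚ)*t) by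
    rw [hn1b, hn1c]; omega)
  have hn1V : padicValRat 2 (9*w + 116*t : ℚ) = 0 + (k+2) := by rw [hn1.2, hn1b]
  have htw0 : t * w ≠ 0 := mul_ne_zero ht0 hw0
  have hn2c : padicValRat 2 ((9:ℚ) * (t*w)) = 0 + ((k+6) + (k+2)) := by
    rw [padicValRat.mul (by norm_num) htw0, c9, padicValRat.mul ht0 hw0, htV, hwV]
  have hn2 := vadd hn1.1 (show padicValRat 2 ((9*w + 116*t : ℚ))
      < padicValRat 2 ((9:ℚ)*(t*w)) by rw [hn1V, hn2c]; omega)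
  have hn2V : padicValRat 2 (9*w + 116*t + 9*(t*w) : ℚ) = 0 + (k+2) := by rw [hn2.2, hn1V]
  have hn3c : padicValRat 2 (-((14:ℚ) * t^2)) = 1 + 2*(k+6) := by
    rw [padicValRat.neg, padicValRat.mul (by norm_num) (pow_ne_zero 2 ht0),
      padicValRat.pow t, c14, htV]
    push_cast; ring
  have hn3 := vadd hn2.1 (show padicValRat 2 ((9*w + 116*t + 9*(t*w) : ℚ))
      < padicValRat 2 (-((14:ℚ)*t^2)) by rw [hn2V, hn3c]; omega)
  have hn3V : padicValRat 2 (9*w + 116*t + 9*(t*w) + -(14*t^2) : ℚ) = k+2 := by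
    rw [hn3.2, hn2V]; omega
  -- 2u² - 65
  have hd1a : (4:ℚ) * t ≠ 0 := mul_ne_zero (by norm_num) ht0
  have hd1b : padicValRat 2 ((4:ℚ) * t) = 2 + (k+6) := by
    rw [padicValRat.mul (by norm_num) ht0, c4, htV]
  have hd1c : padicValRat 2 ((2:ℚ) * t^2) = 1 + 2*(k+6) := by
    rw [padicValRat.mul (by norm_num) (pow_ne_zero 2 ht0), padicValRat.pow t, c2, htV]
    push_cast; ring
  have hd1 := vadd hd1a (show padicValRat 2 ((4:ℚ)*t) < padicValRat 2 ((2:ℚ)*t^2) by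
    rw [hd1b, hd1c]; omega)
  have hd1V : padicValRat 2 (4*t + 2*t^2 : ℚ) = 2 + (k+6) := by rw [hd1.2, hd1b]
  have hd2 := vadd (show (-63:ℚ) ≠ 0 by norm_num)
    (show padicValRat 2 (-63:ℚ) < padicValRat 2 ((4*t + 2*t^2 : ℚ)) by rw [c63, hd1V]; omega)
  have hd65g : (2*u^2 - 65 : ℚ) = -63 + (4*t + 2*t^2) := by rw [hu]; ring
  have h65 : (2*u^2 - 65 : ℚ) ≠ 0 := by rw [hd65g]; exact hd2.1
  have h65V : padicValRat 2 (2*u^2 - 65 : ℚ) = 0 := by rw [hd65g, hd2.2, c63]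
  -- s
  set s : ℚ := u * (vc - 2*u) / (2*u^2 - 65) with hsdef
  have hs : s * (2*u^2 - 65) = u * (vc - 2*u) := by rw [hsdef]; exact div_mul_cancel₀ _ h65
  have hq : vc^2 = -2*u^4 + 63*u^2 + 195 := hq0
  -- s + 2/9 value
  have hsum : (s + 2/9) * (9*(2*u^2 - 65)) = 9*w + 116*t + 9*(t*w) + -(14*t^2) := by
    linear_combination 9*hs + (-14*u + 9*vc - 14*(1+t))*hu + (-(9*(1+t)))*hwdef
  have h9d : (9:ℚ) * (2*u^2 - 65) ≠ 0 := mul_ne_zero (by norm_num) h65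
  have hsdiv : s + 2/9 = (9*w + 116*t + 9*(t*w) + -(14*t^2)) / (9*(2*u^2 - 65)) := by
    rw [eq_div_iff h9d]; exact hsum
  have hfinal : padicValRat 2 (s + 2/9) = k + 2 := by
    rw [hsdiv, padicValRat.div hn3.1 h9d, hn3V,
      padicValRat.mul (by norm_num : (9:ℚ) ≠ 0) h65, c9, h65V]
    omega
  exact ⟨s, s + 1 + u, s + 1 - u, surfId u vc s hq h65 hs, hfinal⟩

private def nX (P : ℚ × ℚ) : ℚ := ((3*P.1^2 + 307152)/(2*P.2))^2 - 2*P.1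
private def nY (P : ℚ × ℚ) : ℚ := ((3*P.1^2 + 307152)/(2*P.2)) * (P.1 - nX P) - P.2

private def seqP : ℕ → ℚ × ℚ
  | 0 => (243050553/20164, 3797415412371/2863288)
  | n+1 => (nX (seqP n), nY (seqP n))

private lemma step (X Y : ℚ) (k : ℤ) (hk : 1 ≤ k)
    (hE : Y ^ 2 = X ^ 3 + 307152 * X + 3921063552)
    (hX : padicValRat 2 X = -2 * k) (hY : padicValRat 2 Y = -3 * k) :
    nY (X, Y) ^ 2 = nX (X, Y) ^ 3 + 307152 * nX (X, Y) + 3921063552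
    ∧ padicValRat 2 (nX (X, Y)) = -2 * (k+1)
    ∧ padicValRat 2 (nY (X, Y)) = -3 * (k+1) := by
  have hX0 : X ≠ 0 := by intro h; rw [h, padicValRat.zero] at hX; omega
  have hY0 : Y ≠ 0 := by intro h; rw [h, padicValRat.zero] at hY; omega
  have c3 : padicValRat 2 (3:ℚ) = 0 := v2c 0 3 (by norm_num) (by decide)
  have c307152 : padicValRat 2 (307152:ℚ) = 4 := v2c 4 19197 (by norm_num) (by decide)
  have c2 : padicValRat 2 (2:ℚ) = 1 := v2c 1 1 (by norm_num) (by decide)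
  have h2Y : (2:ℚ) * Y ≠ 0 := mul_ne_zero two_ne_zero hY0
  simp only [nX, nY]
  set l : ℚ := (3*X^2 + 307152)/(2*Y) with hldef
  have hl : l * (2*Y) = 3*X^2 + 307152 := by rw [hldef]; exact div_mul_cancel₀ _ h2Y
  have hn1 : (3:ℚ)*X^2 ≠ 0 := mul_ne_zero (by norm_num) (pow_ne_zero 2 hX0)
  have hn2 : padicValRat 2 ((3:ℚ)*X^2) = 0 + 2*(-2*k) := by
    rw [padicValRat.mul (by norm_num) (pow_ne_zero 2 hX0), padicValRat.pow X, hX, c3]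
    push_cast; ring
  have hnum := vadd hn1 (show padicValRat 2 ((3:ℚ)*X^2) < padicValRat 2 (307152:ℚ) by
    rw [hn2, c307152]; omega)
  have hnumV : padicValRat 2 (3*X^2 + 307152 : ℚ) = 0 + 2*(-2*k) := by rw [hnum.2, hn2]
  have h2YV : padicValRat 2 ((2:ℚ)*Y) = 1 + -3*k := by
    rw [padicValRat.mul two_ne_zero hY0, hY, c2]
  have hl0 : l ≠ 0 := by rw [hldef]; exact div_ne_zero hnum.1 h2Y
  have hlV : padicValRat 2 l = -k + -1 := by
    rw [hldef, padicValRat.div hnum.1 h2Y, hnumV, h2YV]; omega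
  have ha : l^2 ≠ 0 := pow_ne_zero 2 hl0
  have haV : padicValRat 2 (l^2) = 2*(-k + -1) := by rw [padicValRat.pow l, hlV]; push_cast; ring
  have hbV : padicValRat 2 (-((2:ℚ)*X)) = 1 + -2*k := by
    rw [padicValRat.neg, padicValRat.mul two_ne_zero hX0, c2, hX]
  have hX2 := vadd ha (show padicValRat 2 (l^2) < padicValRat 2 (-((2:ℚ)*X)) by
    rw [haV, hbV]; omega)
  have hX2g : l^2 - 2*X = l^2 + -(2*X) := by ring
  have hX2V : padicValRat 2 (l^2 - 2*X) = -2*(k+1) := by rw [hX2g, hX2.2, haV]; ring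
  have hX20 : l^2 - 2*X ≠ 0 := by rw [hX2g]; exact hX2.1
  have hig : X - (l^2 - 2*X) = -(l^2 - 2*X) + X := by ring
  have hi := vadd (neg_ne_zero.mpr hX20)
    (show padicValRat 2 (-(l^2 - 2*X)) < padicValRat 2 X by
      rw [padicValRat.neg, hX2V, hX]; omega)
  have hiV : padicValRat 2 (X - (l^2 - 2*X)) = -2*(k+1) := by
    rw [hig, hi.2, padicValRat.neg, hX2V]
  have hi0 : X - (l^2 - 2*X) ≠ 0 := by rw [hig]; exact hi.1
  have hlin : l * (X - (l^2 - 2*X)) ≠ 0 := mul_ne_zero hl0 hi0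
  have hlinV : padicValRat 2 (l * (X - (l^2 - 2*X))) = -3*(k+1) := by
    rw [padicValRat.mul hl0 hi0, hlV, hiV]; ring
  have hY2 := vadd hlin (show padicValRat 2 (l * (X - (l^2 - 2*X))) < padicValRat 2 (-Y) by
    rw [hlinV, padicValRat.neg, hY]; omega)
  have hY2g : l*(X - (l^2 - 2*X)) - Y = l*(X - (l^2 - 2*X)) + -Y := by ring
  refine ⟨dblE X Y l hE hl hY0, hX2V, ?_⟩
  rw [hY2g, hY2.2, hlinV]

private lemma inv : ∀ n : ℕ,
    (seqP n).2 ^ 2 = (seqP n).1 ^ 3 + 307152 * (seqP n).1 + 3921063552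
    ∧ padicValRat 2 (seqP n).1 = -2 * ((n:ℤ)+1)
    ∧ padicValRat 2 (seqP n).2 = -3 * ((n:ℤ)+1)
  | 0 => by
    refine ⟨by norm_num [seqP], ?_, ?_⟩
    · show padicValRat 2 ((243050553 : ℚ)/20164) = _
      rw [padicValRat.div (by norm_num) (by norm_num),
        v2c (a := (243050553:ℚ)) 0 243050553 (by norm_num) (by decide),
        v2c (a := (20164:ℚ)) 2 5041 (by norm_num) (by decide)]
      norm_num
    · show padicValRat 2 ((3797415412371 : ℚ)/2863288) = _
      rw [padicValRat.div (by norm_num) (by norm_num),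
        v2c (a := (3797415412371:ℚ)) 0 3797415412371 (by norm_num) (by decide),
        v2c (a := (2863288:ℚ)) 3 357911 (by norm_num) (by decide)]
      norm_num
  | n+1 => by
    obtain ⟨h1, h2, h3⟩ := inv n
    have hs := step (seqP n).1 (seqP n).2 ((n:ℤ)+1) (by omega) h1 h2 h3
    rw [Prod.mk.eta] at hs
    refine ⟨?_, ?_, ?_⟩
    · show nY (seqP n) ^ 2 = nX (seqP n) ^ 3 + 307152 * nX (seqP n) + 3921063552
      exact hs.1
    · show padicValRat 2 (nX (seqP n)) = _
      rw [hs.2.1]; push_cast; ring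
    · show padicValRat 2 (nY (seqP n)) = _
      rw [hs.2.2]; push_cast; ring

theorem stmt_14 :
    {x : ℚ | ∃ p q : ℚ, (p ^ 2 + q ^ 2 + 1) ^ 2 =
      9 + 24 * x + 288 * x ^ 2 + 16 * x ^ 3 + 4 * x ^ 4}.Infinite := by
  have key : ∀ n : ℕ, ∃ s p q : ℚ, ((p ^ 2 + q ^ 2 + 1) ^ 2
      = 9 + 24 * s + 288 * s ^ 2 + 16 * s ^ 3 + 4 * s ^ 4)
      ∧ padicValRat 2 (s + 2/9) = (n:ℤ) + 6 := by
    intro n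
    obtain ⟨h1, h2, h3⟩ := inv (n+3)
    obtain ⟨s, p, q, hpq, hv⟩ := main (seqP (n+3)).1 (seqP (n+3)).2 ((n:ℤ)+4) (by omega) h1
      (by rw [h2]; push_cast; ring) (by rw [h3]; push_cast; ring)
    exact ⟨s, p, q, hpq, by rw [hv]; ring⟩
  choose F P Q hPQ hval using key
  apply Set.infinite_of_injective_forall_mem (f := F)
  · intro m n hmn
    have h1 := hval m
    rw [hmn, hval n] at h1
    omega
  · intro n
    exact ⟨P n, Q n, hPQ n⟩
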